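/- Let U = exp((-(π/4)·i : ℂ) • (Z ⊗ₖ Z)) be the two-qubit entangling braiding unitary. Then conjugation by U implements the logical transformation Z̄₁ → Z̄₁, Z̄₂ → Z̄₂, X̄₁ → Ȳ₁Z̄₂, X̄₂ → Z̄₁Ȳ₂; explicitly: U * (Z ⊗ₖ 1) = (Z ⊗ₖ 1) * U, U * (1 ⊗ₖ Z) = (1 ⊗ₖ Z) * U, U * (X ⊗ₖ 1) = (Y ⊗ₖ Z) * U, and U * (1 ⊗ₖ X) = (Z ⊗ₖ Y) * U. -/

import Mathlib

open Matrix Complex Kronecker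

/-- conjugation by the entangling braiding unitary
`U = exp(-i(π/4) Z ⊗ Z)` implements the logical transformation
`Z̄₁ → Z̄₁`, `Z̄₂ → Z̄₂`, `X̄₁ → Ȳ₁Z̄₂`, `X̄₂ → Z̄₁Ȳ₂`. -/
theorem entangling_braid_logical_action
    (X Y Z U : Matrix (Fin 2) (Fin 2) ℂ)
    (hX : X = !![0, 1; 1, 0])
    (hY : Y = !![0, -I; I, 0])
    (hZ : Z = !![1, 0; 0, -1])
    (Ubig : Matrix (Fin 2 × Fin 2) (Fin 2 × Fin 2) ℂ)
    (hU : Ubig = NormedSpace.exp (((-(Real.pi / 4 : ℝ) : ℂ) * I) • (Z ⊗ₖ Z))) :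
    Ubig * (Z ⊗ₖ (1 : Matrix (Fin 2) (Fin 2) ℂ)) = (Z ⊗ₖ (1 : Matrix (Fin 2) (Fin 2) ℂ)) * Ubig ∧
    Ubig * ((1 : Matrix (Fin 2) (Fin 2) ℂ) ⊗ₖ Z) = ((1 : Matrix (Fin 2) (Fin 2) ℂ) ⊗ₖ Z) * Ubig ∧
    Ubig * (X ⊗ₖ (1 : Matrix (Fin 2) (Fin 2) ℂ)) = (Y ⊗ₖ Z) * Ubig ∧
    Ubig * ((1 : Matrix (Fin 2) (Fin 2) ℂ) ⊗ₖ X) = (Z ⊗ₖ Y) * Ubig := by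
  set c : ℂ := (-(Real.pi / 4 : ℝ) : ℂ) * I with hc
  set v : Fin 2 × Fin 2 → ℂ := fun p => if p.1 = p.2 then c else -c with hv
  have hdiag : ((-(Real.pi / 4 : ℝ) : ℂ) * I) • (Z ⊗ₖ Z) = Matrix.diagonal v := by
    ext ⟨i, j⟩ ⟨k, l⟩
    fin_cases i <;> fin_cases j <;> fin_cases k <;> fin_cases l <;>
      simp [hZ, Matrix.kroneckerMap_apply, Matrix.diagonal_apply, Prod.ext_iff, hv, hc]
  have hUdiag : Ubig = Matrix.diagonal (fun p => NormedSpace.exp (v p)) := by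
    rw [hU, hdiag, Matrix.exp_diagonal]
    rw [Pi.exp_def]
  set E : ℂ := NormedSpace.exp c with hE
  set F : ℂ := NormedSpace.exp (-c) with hF
  have hEF : E * F = 1 := by
    rw [hE, hF, ← NormedSpace.exp_add]
    simp
  have hEE : E * E = -I := by
    rw [hE, ← NormedSpace.exp_add, ← Complex.exp_eq_exp_ℂ]
    have h : c + c = (-(Real.pi / 2 : ℝ) : ℂ) * I := by
      rw [hc]; push_cast; ring
    rw [h]
    push_cast
    rw [neg_mul, Complex.exp_neg, Complex.exp_mul_I]
    norm_num [Complex.cos_pi_div_two, Complex.sin_pi_div_two]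
  have hFF : F * F = I := by
    have h4 : (E * E) * (F * F) = (E * F) * (E * F) := by ring
    rw [hEF, hEE, mul_one] at h4
    linear_combination I * h4 + (F * F) * Complex.I_mul_I
  have h1 : E = -I * F := by
    have h5 : E * (E * F) = (E * E) * F := by ring
    rw [hEF, mul_one, hEE] at h5
    exact h5
  have h2 : F = I * E := by
    have h6 : F * (E * F) = (F * F) * E := by ring
    rw [hEF, mul_one, hFF] at h6
    exact h6
  subst hUdiag
  clear hU hdiag
  refine ⟨?_, ?_, ?_, ?_⟩ <;>
    · ext ⟨i, j⟩ ⟨k, l⟩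
      simp only [Matrix.diagonal_mul, Matrix.mul_diagonal, Matrix.kroneckerMap_apply]
      fin_cases i <;> fin_cases j <;> fin_cases k <;> fin_cases l <;>
        simp [hX, hY, hZ, hv, Matrix.one_apply, ← hE, ← hF, h1] <;> ring_nf <;> simp [Complex.I_sq]
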